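/- Let S be a finite set and υ : 𝒫(S) → ℝ a nonnegative, monotone, submodular set function with υ(∅) = 0. Let k ∈ ℕ and let X_greedy be the set produced by k steps of the greedy algorithm that starts from ∅ and at each step adds an element e maximizing υ(X ∪ {e}). Then υ(X_greedy) ≥ (1 - 1/e) · max{υ(Y) : Y ⊆ S, |Y| ≤ k}. -/

import Mathlib

/-- Nemhauser–Wolsey: greedy maximization of a nonnegative monotone submodular
    set function with a cardinality budget k achieves a (1 - 1/e) approximation. -/
theorem stmt_4 {S : Type*} [Fintype S] [DecidableEq S]
    (υ : Finset S → ℝ)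
    (hnonneg : ∀ X, 0 ≤ υ X)
    (hmono : ∀ X Y : Finset S, X ⊆ Y → υ X ≤ υ Y)
    (hsub : ∀ X Y : Finset S, X ⊆ Y → ∀ x ∉ Y,
      υ (insert x Y) - υ Y ≤ υ (insert x X) - υ X)
    (hempty : υ ∅ = 0)
    (k : ℕ)
    (X : ℕ → Finset S)
    (hX0 : X 0 = ∅)
    (hgreedy : ∀ j, ∃ e : S, X (j + 1) = insert e (X j) ∧
      ∀ e' : S, υ (insert e' (X j)) ≤ υ (insert e (X j))) :
    ∀ Y : Finset S, Y.card ≤ k → (1 - 1 / Real.exp 1) * υ Y ≤ υ (X k) := by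
  intro Y hY
  rcases Nat.eq_zero_or_pos k with hk0 | hk
  · subst hk0
    have hYe : Y = ∅ := Finset.card_eq_zero.mp (Nat.le_zero.mp hY)
    subst hYe
    simp [hempty, hX0]
  -- submodular sum lemma
  have hsum : ∀ (T B : Finset S), Disjoint T B →
      υ (B ∪ T) - υ B ≤ ∑ e ∈ T, (υ (insert e B) - υ B) := by
    intro T
    induction T using Finset.induction_on with
    | empty => intro B _; simp
    | @insert x s hxs ih =>
      intro B hdisj
      rw [Finset.disjoint_insert_left] at hdisj
      obtain ⟨hxB, hdisj⟩ := hdisj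
      have hxBs : x ∉ B ∪ s := by simp [hxB, hxs]
      have h1 : υ (insert x (B ∪ s)) - υ (B ∪ s) ≤ υ (insert x B) - υ B :=
        hsub B (B ∪ s) Finset.subset_union_left x hxBs
      have h2 := ih B hdisj
      rw [Finset.union_insert, Finset.sum_insert hxs]
      linarith
  -- greedy gain bounds
  have hstep : ∀ i, X (i + 1) ⊇ X i ∧
      ∀ e : S, υ (insert e (X i)) - υ (X i) ≤ υ (X (i + 1)) - υ (X i) := by
    intro i
    obtain ⟨g, hg1, hg2⟩ := hgreedy i
    constructor
    · rw [hg1]; exact Finset.subset_insert _ _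
    · intro e; rw [hg1]; linarith [hg2 e]
  have hgain0 : ∀ i, 0 ≤ υ (X (i + 1)) - υ (X i) := by
    intro i
    have := hmono _ _ (hstep i).1
    linarith
  -- key per-step inequality
  have hkey : ∀ i, υ Y - υ (X i) ≤ (k : ℝ) * (υ (X (i + 1)) - υ (X i)) := by
    intro i
    have h1 : υ Y ≤ υ (X i ∪ (Y \ X i)) := by
      apply hmono
      intro y hy
      by_cases h : y ∈ X i <;> simp [h, hy]
    have h2 : υ (X i ∪ (Y \ X i)) - υ (X i) ≤
        ∑ e ∈ Y \ X i, (υ (insert e (X i)) - υ (X i)) :=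
      hsum _ _ (Finset.sdiff_disjoint)
    have h3 : ∑ e ∈ Y \ X i, (υ (insert e (X i)) - υ (X i)) ≤
        ((Y \ X i).card : ℝ) * (υ (X (i + 1)) - υ (X i)) := by
      have := Finset.sum_le_card_nsmul (Y \ X i)
        (fun e => υ (insert e (X i)) - υ (X i)) (υ (X (i + 1)) - υ (X i))
        (fun e _ => (hstep i).2 e)
      simpa [nsmul_eq_mul] using this
    have hcard : ((Y \ X i).card : ℝ) ≤ (k : ℝ) := by
      exact_mod_cast le_trans (Finset.card_le_card (Finset.sdiff_subset)) hY
    have h4 : ((Y \ X i).card : ℝ) * (υ (X (i + 1)) - υ (X i)) ≤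
        (k : ℝ) * (υ (X (i + 1)) - υ (X i)) :=
      mul_le_mul_of_nonneg_right hcard (hgain0 i)
    linarith
  set kr : ℝ := (k : ℝ) with hkr
  have hkrpos : 0 < kr := by positivity
  set c : ℝ := 1 - 1 / kr with hc
  have hc0 : 0 ≤ c := by
    rw [hc]
    have : 1 / kr ≤ 1 := by
      rw [div_le_one hkrpos]; exact_mod_cast Nat.one_le_cast.mpr hk
    linarith
  -- contraction step
  have hcontr : ∀ i, υ Y - υ (X (i + 1)) ≤ c * (υ Y - υ (X i)) := by
    intro i
    have h := hkey i
    have : kr * (υ Y - υ (X (i + 1))) ≤ (kr - 1) * (υ Y - υ (X i)) := by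
      nlinarith [h]
    have hc' : c * (υ Y - υ (X i)) = ((kr - 1) * (υ Y - υ (X i))) / kr := by
      rw [hc]; field_simp
    rw [hc']
    rw [le_div_iff₀ hkrpos]
    linarith
  -- iterate
  have hiter : ∀ i, υ Y - υ (X i) ≤ c ^ i * υ Y := by
    intro i
    induction i with
    | zero => simp [hX0, hempty]
    | succ n ihn =>
      calc υ Y - υ (X (n + 1)) ≤ c * (υ Y - υ (X n)) := hcontr n
        _ ≤ c * (c ^ n * υ Y) := mul_le_mul_of_nonneg_left ihn hc0
        _ = c ^ (n + 1) * υ Y := by ring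
  -- bound c^k ≤ 1/e
  have hcexp : c ≤ Real.exp (-(1 / kr)) := by
    have := Real.add_one_le_exp (-(1 / kr))
    rw [hc]; linarith
  have hpow : c ^ k ≤ 1 / Real.exp 1 := by
    calc c ^ k ≤ (Real.exp (-(1 / kr))) ^ k := pow_le_pow_left₀ hc0 hcexp k
      _ = Real.exp ((k : ℝ) * (-(1 / kr))) := (Real.exp_nat_mul _ k).symm
      _ = Real.exp (-1) := by
          congr 1
          field_simp
          rw [hkr]
      _ = 1 / Real.exp 1 := by rw [Real.exp_neg]; ring
  have hfinal : υ Y - υ (X k) ≤ (1 / Real.exp 1) * υ Y := by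
    calc υ Y - υ (X k) ≤ c ^ k * υ Y := hiter k
      _ ≤ (1 / Real.exp 1) * υ Y := mul_le_mul_of_nonneg_right hpow (hnonneg Y)
  linarith [hfinal]
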